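/- Let A = {−1,1} and let r ≥ 5 with r ≡ 0 (mod 4), and set m = ⌊(3r−4)/4⌋. Then s_A(C_3^r) ≥ 2·Σ binom(r, j) + binom(r, r/2) + 1, where the sum is over odd j with 1 ≤ j ≤ m. -/

import Mathlib

/-- A multiset `S` over an additive abelian group `G` has an `A`-zero-sum subsequence
of length `k`, for the weight set `A = {-1, 1}`: there is a sub-multiset of `S` of
cardinality `k` that splits as `t₁ + t₂` with `t₁.sum - t₂.sum = 0` (the elements of
`t₁` receive the weight `+1` and those of `t₂` the weight `-1`). -/
def HasWZSS {G : Type*} [AddCommGroup G] (S : Multiset G) (k : ℕ) : Prop :=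
  ∃ t₁ t₂ : Multiset G, t₁ + t₂ ≤ S ∧ Multiset.card (t₁ + t₂) = k ∧ t₁.sum = t₂.sum

/-- `sA G` is the smallest `ℓ` such that every sequence over `G` of length at least `ℓ`
has an `{-1,1}`-zero-sum subsequence of length `exp G`. -/
noncomputable def sA (G : Type*) [AddCommGroup G] : ℕ :=
  sInf {ℓ : ℕ | ∀ S : Multiset G, ℓ ≤ Multiset.card S →
    HasWZSS S (AddMonoid.exponent G)}

/-- `etaA G` is the smallest `ℓ` such that every sequence over `G` of length at least `ℓ`
has a nonempty `{-1,1}`-zero-sum subsequence of length at most `exp G`. -/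
noncomputable def etaA (G : Type*) [AddCommGroup G] : ℕ :=
  sInf {ℓ : ℕ | ∀ S : Multiset G, ℓ ≤ Multiset.card S →
    ∃ k, 1 ≤ k ∧ k ≤ AddMonoid.exponent G ∧ HasWZSS S k}

/-- `gA G` is the smallest `ℓ` such that every sequence over `G` of length at least `ℓ`
consisting of pairwise distinct elements has an `{-1,1}`-zero-sum subsequence of
length `exp G`. -/
noncomputable def gA (G : Type*) [AddCommGroup G] : ℕ :=
  sInf {ℓ : ℕ | ∀ S : Multiset G, ℓ ≤ Multiset.card S → S.Nodup →
    HasWZSS S (AddMonoid.exponent G)}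


namespace SA3

open Finset

variable {r : ℕ}

def wt (x : Fin r → ZMod 3) : ℕ := (univ.filter fun i => x i = 1).card

def ind (x : Fin r → ZMod 3) (i : Fin r) : ℕ := if x i = 1 then 1 else 0

lemma wt_eq (x : Fin r → ZMod 3) : wt x = ∑ i, ind x i := by
  rw [wt, card_filter]; rfl

def chi (U : Finset (Fin r)) : Fin r → ZMod 3 := fun i => if i ∈ U then 1 else 0
def tv (T : Finset (Fin r)) : Fin r → ZMod 3 := fun i => if i ∈ T then 1 else -1

def Bt (m : ℕ) (x : Fin r → ZMod 3) : Prop :=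
  (∀ i, x i = 0 ∨ x i = 1) ∧ Odd (wt x) ∧ wt x ≤ m
def Tt (x : Fin r → ZMod 3) : Prop :=
  (∀ i, x i = 1 ∨ x i = -1) ∧ wt x = r / 2

def BS (r m : ℕ) : Finset (Finset (Fin r)) :=
  univ.filter (fun U => Odd U.card ∧ U.card ≤ m)
def TS (r : ℕ) : Finset (Finset (Fin r)) := univ.filter (fun T => T.card = r / 2)

def S (r m : ℕ) : Multiset (Fin r → ZMod 3) :=
  2 • ((BS r m).val.map chi) + (TS r).val.map tv

lemma chi_inj : Function.Injective (chi (r := r)) := by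
  intro U V h
  ext i
  have := congrFun h i
  simp only [chi] at this
  by_cases hU : i ∈ U <;> by_cases hV : i ∈ V <;>
    simp [hU, hV] at this ⊢ <;> exact absurd this (by decide)

lemma tv_inj : Function.Injective (tv (r := r)) := by
  intro U V h
  ext i
  have := congrFun h i
  simp only [tv] at this
  by_cases hU : i ∈ U <;> by_cases hV : i ∈ V <;>
    simp [hU, hV] at this ⊢ <;> exact absurd this (by decide)

lemma wt_chi (U : Finset (Fin r)) : wt (chi U) = U.card := by
  have : (univ.filter fun i => chi U i = 1) = U := by
    ext i
    simp only [mem_filter, mem_univ, true_and, chi]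
    by_cases h : i ∈ U <;> simp [h]
  rw [wt, this]

lemma wt_tv (T : Finset (Fin r)) : wt (tv T) = T.card := by
  have : (univ.filter fun i => tv T i = 1) = T := by
    ext i
    simp only [mem_filter, mem_univ, true_and, tv]
    by_cases h : i ∈ T <;> simp [h]
    decide
  rw [wt, this]

lemma mem_mB {m : ℕ} {x : Fin r → ZMod 3} (h : x ∈ (BS r m).val.map chi) : Bt m x := by
  rcases Multiset.mem_map.mp h with ⟨U, hU, rfl⟩
  have hU' : Odd U.card ∧ U.card ≤ m := by
    simpa [BS] using hU
  refine ⟨fun i => ?_, by rw [wt_chi]; exact hU'.1, by rw [wt_chi]; exact hU'.2⟩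
  simp only [chi]; split_ifs <;> simp

lemma mem_mT {x : Fin r → ZMod 3} (h : x ∈ (TS r).val.map tv) : Tt x := by
  rcases Multiset.mem_map.mp h with ⟨T, hT, rfl⟩
  have hT' : T.card = r / 2 := by simpa [TS] using hT
  refine ⟨fun i => ?_, by rw [wt_tv]; exact hT'⟩
  simp only [tv]; split_ifs <;> simp

lemma mem_S {m : ℕ} {x : Fin r → ZMod 3} (h : x ∈ S r m) : Bt m x ∨ Tt x := by
  rw [S, Multiset.mem_add] at h
  rcases h with h | h
  · exact Or.inl (mem_mB ((Multiset.mem_nsmul.mp h).2))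
  · exact Or.inr (mem_mT h)

lemma count_mB_le {m : ℕ} (x : Fin r → ZMod 3) :
    Multiset.count x ((BS r m).val.map chi) ≤ 1 :=
  Multiset.nodup_iff_count_le_one.mp ((BS r m).nodup.map chi_inj) x

lemma count_mT_le (x : Fin r → ZMod 3) :
    Multiset.count x ((TS r).val.map tv) ≤ 1 :=
  Multiset.nodup_iff_count_le_one.mp ((TS r).nodup.map tv_inj) x

lemma count_S (hmod : r % 4 = 0) {m : ℕ} (x : Fin r → ZMod 3) :
    Multiset.count x (S r m) ≤ 2 ∧ (wt x = r / 2 → Multiset.count x (S r m) ≤ 1) := by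
  have hcnt : Multiset.count x (S r m) =
      2 * Multiset.count x ((BS r m).val.map chi) + Multiset.count x ((TS r).val.map tv) := by
    rw [S, Multiset.count_add, Multiset.count_nsmul]
  have hB := count_mB_le (m := m) x
  have hT := count_mT_le x
  by_cases hBx : x ∈ (BS r m).val.map chi
  · have hodd : Odd (wt x) := (mem_mB hBx).2.1
    have hT0 : Multiset.count x ((TS r).val.map tv) = 0 := by
      rw [Multiset.count_eq_zero]
      intro hTx
      have := (mem_mT hTx).2
      rw [this] at hodd
      rw [Nat.odd_iff] at hodd
      omega
    constructor
    · omega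
    · intro hw
      rw [hw] at hodd; rw [Nat.odd_iff] at hodd; omega
  · have hB0 : Multiset.count x ((BS r m).val.map chi) = 0 :=
      Multiset.count_eq_zero.mpr hBx
    omega

end SA3
open Finset
namespace SA3
variable {r : ℕ}

-- generic summation helper
lemma sum_ind_eq {f g : Fin r → ℕ} (h : ∀ i, f i = g i) : ∑ i, f i = ∑ i, g i :=
  Finset.sum_congr rfl fun i _ => h i

/-! per-coordinate facts over `ZMod 3`, all by `decide` -/

-- x+y+z = 0 cases
lemma cBBB0 : ∀ a b c : ZMod 3, (a = 0 ∨ a = 1) → (b = 0 ∨ b = 1) → (c = 0 ∨ c = 1) →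
    a + b + c = 0 → a = b ∧ a = c := by decide
lemma cBBT0 : ∀ a b c : ZMod 3, (a = 0 ∨ a = 1) → (b = 0 ∨ b = 1) → (c = 1 ∨ c = -1) →
    a + b + c = 0 →
    (if a = 1 then (1:ℕ) else 0) + (if b = 1 then 1 else 0) = (if c = 1 then 1 else 0) + 1 := by
  decide
lemma cBTT0 : ∀ a b c : ZMod 3, (a = 0 ∨ a = 1) → (b = 1 ∨ b = -1) → (c = 1 ∨ c = -1) →
    a + b + c = 0 →
    (if b = 1 then (1:ℕ) else 0) + (if c = 1 then 1 else 0) = (if a = 1 then 1 else 0) + 1 := by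
  decide
lemma cTTT0 : ∀ a b c : ZMod 3, (a = 1 ∨ a = -1) → (b = 1 ∨ b = -1) → (c = 1 ∨ c = -1) →
    a + b + c = 0 → a = b ∧ a = c := by decide

-- x+y = z cases
lemma cBBB1 : ∀ a b c : ZMod 3, (a = 0 ∨ a = 1) → (b = 0 ∨ b = 1) → (c = 0 ∨ c = 1) →
    a + b = c →
    (if a = 1 then (1:ℕ) else 0) + (if b = 1 then 1 else 0) = (if c = 1 then 1 else 0) := by
  decide
lemma cBBT1 : ∀ a b c : ZMod 3, (a = 0 ∨ a = 1) → (b = 0 ∨ b = 1) → (c = 1 ∨ c = -1) →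
    a + b = c →
    (if a = 1 then (1:ℕ) else 0) + (if b = 1 then 1 else 0) + (if c = 1 then 1 else 0) = 2 := by
  decide
lemma cBTB1 : ∀ a b c : ZMod 3, (a = 0 ∨ a = 1) → (b = 1 ∨ b = -1) → (c = 0 ∨ c = 1) →
    a + b = c → (if c = 1 then (1:ℕ) else 0) = (if b = 1 then 1 else 0) := by decide
lemma cBTT1 : ∀ a b c : ZMod 3, (a = 0 ∨ a = 1) → (b = 1 ∨ b = -1) → (c = 1 ∨ c = -1) →
    a + b = c →
    (if b = 1 then (1:ℕ) else 0) = (if c = 1 then 1 else 0) + (if a = 1 then 1 else 0) := by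
  decide
lemma cTTB1 : ∀ a b c : ZMod 3, (a = 1 ∨ a = -1) → (b = 1 ∨ b = -1) → (c = 0 ∨ c = 1) →
    a + b = c →
    (if a = 1 then (1:ℕ) else 0) + (if b = 1 then 1 else 0) + (if c = 1 then 1 else 0) = 1 := by
  decide
lemma cTTT1 : ∀ a b c : ZMod 3, (a = 1 ∨ a = -1) → (b = 1 ∨ b = -1) → (c = 1 ∨ c = -1) →
    a + b = c → a = b := by decide

/-! the triple-elimination lemmas -/

variable {m : ℕ}

lemma apply_sum0 {x y z : Fin r → ZMod 3} (h : x + y + z = 0) (i : Fin r) :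
    x i + y i + z i = 0 := by
  have := congrFun h i; simpa using this

lemma apply_sum1 {x y z : Fin r → ZMod 3} (h : x + y = z) (i : Fin r) :
    x i + y i = z i := by
  have := congrFun h i; simpa using this

-- arithmetic context: r = 4k with k ≥ 2, m = 3k - 1
-- hm : 4 * m + 4 = 3 * r, hmod : r % 4 = 0, hr : 8 ≤ r

lemma key1 (hmod : r % 4 = 0) (hr : 8 ≤ r) (hm : 4 * m + 4 = 3 * r)
    {x y z : Fin r → ZMod 3} (h3 : ({x, y, z} : Multiset (Fin r → ZMod 3)) ≤ S r m)
    (hsum : x + y + z = 0) : False := by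
  have hx := mem_S (m := m) (x := x) (Multiset.subset_of_le h3 (by simp))
  have hy := mem_S (m := m) (x := y) (Multiset.subset_of_le h3 (by simp))
  have hz := mem_S (m := m) (x := z) (Multiset.subset_of_le h3 (by simp))
  -- helper to dispatch the "all equal" situations
  have hcnt : ∀ w : Fin r → ZMod 3, ({w, w, w} : Multiset (Fin r → ZMod 3)) ≤ S r m → False := by
    intro w hw
    have := Multiset.le_iff_count.mp hw w
    simp [Multiset.count_cons] at this
    have h2 := (count_S hmod (m := m) w).1
    omega
  -- the mixed (B,B,T) situation, up to permutation
  have hBBT : ∀ a b c : Fin r → ZMod 3, Bt m a → Bt m b → Tt c →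
      a + b + c = 0 → False := by
    intro a b c ha hb hc habc
    have key : ∀ i, ind a i + ind b i = ind c i + 1 := fun i =>
      cBBT0 _ _ _ (ha.1 i) (hb.1 i) (hc.1 i) (apply_sum0 habc i)
    have hsum2 : ∑ i, (ind a i + ind b i) = ∑ i, (ind c i + 1) := sum_ind_eq key
    rw [Finset.sum_add_distrib, Finset.sum_add_distrib, ← wt_eq, ← wt_eq, ← wt_eq] at hsum2
    simp only [Finset.sum_const, Finset.card_univ, Fintype.card_fin, smul_eq_mul, mul_one] at hsum2
    have h1 := ha.2.2
    have h2 := hb.2.2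
    have h3' := hc.2
    omega
  -- the mixed (B,T,T) situation, up to permutation
  have hBTT : ∀ a b c : Fin r → ZMod 3, Bt m a → Tt b → Tt c →
      a + b + c = 0 → False := by
    intro a b c ha hb hc habc
    have key : ∀ i, ind b i + ind c i = ind a i + 1 := fun i =>
      cBTT0 _ _ _ (ha.1 i) (hb.1 i) (hc.1 i) (apply_sum0 habc i)
    have hsum2 : ∑ i, (ind b i + ind c i) = ∑ i, (ind a i + 1) := sum_ind_eq key
    rw [Finset.sum_add_distrib, Finset.sum_add_distrib, ← wt_eq, ← wt_eq, ← wt_eq] at hsum2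
    simp only [Finset.sum_const, Finset.card_univ, Fintype.card_fin, smul_eq_mul, mul_one] at hsum2
    have h1 := hb.2
    have h2 := hc.2
    have h3' : Odd (wt a) := ha.2.1
    rw [Nat.odd_iff] at h3'
    omega
  rcases hx with hx | hx <;> rcases hy with hy | hy <;> rcases hz with hz | hz
  · -- BBB : all equal
    have key : ∀ i, x i = y i ∧ x i = z i := fun i =>
      cBBB0 _ _ _ (hx.1 i) (hy.1 i) (hz.1 i) (apply_sum0 hsum i)
    have hxy : x = y := funext fun i => (key i).1
    have hxz : x = z := funext fun i => (key i).2
    exact hcnt x (by rwa [← hxy, ← hxz] at h3)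
  · exact hBBT x y z hx hy hz hsum
  · exact hBBT x z y hx hz hy (by linear_combination hsum)
  · exact hBTT x y z hx hy hz hsum
  · exact hBBT y z x hy hz hx (by linear_combination hsum)
  · exact hBTT y x z hy hx hz (by linear_combination hsum)
  · exact hBTT z x y hz hx hy (by linear_combination hsum)
  · -- TTT : all equal
    have key : ∀ i, x i = y i ∧ x i = z i := fun i =>
      cTTT0 _ _ _ (hx.1 i) (hy.1 i) (hz.1 i) (apply_sum0 hsum i)
    have hxy : x = y := funext fun i => (key i).1
    have hxz : x = z := funext fun i => (key i).2
    exact hcnt x (by rwa [← hxy, ← hxz] at h3)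

lemma key2 (hmod : r % 4 = 0) (hr : 8 ≤ r) (hm : 4 * m + 4 = 3 * r)
    {x y z : Fin r → ZMod 3} (h3 : ({x, y, z} : Multiset (Fin r → ZMod 3)) ≤ S r m)
    (hsum : x + y = z) : False := by
  have hx := mem_S (m := m) (x := x) (Multiset.subset_of_le h3 (by simp))
  have hy := mem_S (m := m) (x := y) (Multiset.subset_of_le h3 (by simp))
  have hz := mem_S (m := m) (x := z) (Multiset.subset_of_le h3 (by simp))
  have hhalf : r / 2 = 2 * (r / 4) := by omega
  -- (B,T|B) case up to swap of the two summands
  have hBTB : ∀ a b c : Fin r → ZMod 3, Bt m a → Tt b → Bt m c →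
      a + b = c → False := by
    intro a b c ha hb hc habc
    have key : ∀ i, ind c i = ind b i := fun i =>
      cBTB1 _ _ _ (ha.1 i) (hb.1 i) (hc.1 i) (apply_sum1 habc i)
    have hsum2 : ∑ i, ind c i = ∑ i, ind b i := sum_ind_eq key
    rw [← wt_eq, ← wt_eq] at hsum2
    have h1 := hb.2
    have h2 : Odd (wt c) := hc.2.1
    rw [Nat.odd_iff] at h2
    omega
  -- (B,T|T) case up to swap
  have hBTT : ∀ a b c : Fin r → ZMod 3, Bt m a → Tt b → Tt c →
      a + b = c → False := by
    intro a b c ha hb hc habc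
    have key : ∀ i, ind b i = ind c i + ind a i := fun i =>
      cBTT1 _ _ _ (ha.1 i) (hb.1 i) (hc.1 i) (apply_sum1 habc i)
    have hsum2 : ∑ i, ind b i = ∑ i, (ind c i + ind a i) := sum_ind_eq key
    rw [Finset.sum_add_distrib, ← wt_eq, ← wt_eq, ← wt_eq] at hsum2
    have h1 := hb.2
    have h2 := hc.2
    have h3' : Odd (wt a) := ha.2.1
    rw [Nat.odd_iff] at h3'
    omega
  rcases hx with hx | hx <;> rcases hy with hy | hy <;> rcases hz with hz | hz
  · -- BB|B : parity
    have key : ∀ i, ind x i + ind y i = ind z i := fun i =>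
      cBBB1 _ _ _ (hx.1 i) (hy.1 i) (hz.1 i) (apply_sum1 hsum i)
    have hsum2 : ∑ i, (ind x i + ind y i) = ∑ i, ind z i := sum_ind_eq key
    rw [Finset.sum_add_distrib, ← wt_eq, ← wt_eq, ← wt_eq] at hsum2
    have h1 : Odd (wt x) := hx.2.1
    have h2 : Odd (wt y) := hy.2.1
    have h3' : Odd (wt z) := hz.2.1
    rw [Nat.odd_iff] at h1 h2 h3'
    omega
  · -- BB|T
    have key : ∀ i, ind x i + ind y i + ind z i = 2 := fun i =>
      cBBT1 _ _ _ (hx.1 i) (hy.1 i) (hz.1 i) (apply_sum1 hsum i)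
    have hsum2 : ∑ i, (ind x i + ind y i + ind z i) = ∑ i, (2:ℕ) := sum_ind_eq key
    rw [Finset.sum_add_distrib, Finset.sum_add_distrib, ← wt_eq, ← wt_eq, ← wt_eq] at hsum2
    simp only [Finset.sum_const, Finset.card_univ, Fintype.card_fin, smul_eq_mul] at hsum2
    have h1 := hx.2.2
    have h2 := hy.2.2
    have h3' := hz.2
    omega
  · exact hBTB x y z hx hy hz hsum
  · exact hBTT x y z hx hy hz hsum
  · exact hBTB y x z hy hx hz (by linear_combination hsum)
  · exact hBTT y x z hy hx hz (by linear_combination hsum)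
  · -- TT|B
    have key : ∀ i, ind x i + ind y i + ind z i = 1 := fun i =>
      cTTB1 _ _ _ (hx.1 i) (hy.1 i) (hz.1 i) (apply_sum1 hsum i)
    have hsum2 : ∑ i, (ind x i + ind y i + ind z i) = ∑ i, (1:ℕ) := sum_ind_eq key
    rw [Finset.sum_add_distrib, Finset.sum_add_distrib, ← wt_eq, ← wt_eq, ← wt_eq] at hsum2
    simp only [Finset.sum_const, Finset.card_univ, Fintype.card_fin, smul_eq_mul, mul_one] at hsum2
    have h1 := hx.2
    have h2 := hy.2
    have h3' : Odd (wt z) := hz.2.1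
    rw [Nat.odd_iff] at h3'
    omega
  · -- TT|T : x = y, multiplicity of a T element
    have key : ∀ i, x i = y i := fun i =>
      cTTT1 _ _ _ (hx.1 i) (hy.1 i) (hz.1 i) (apply_sum1 hsum i)
    have hxy : x = y := funext key
    rw [← hxy] at h3
    have := Multiset.le_iff_count.mp h3 x
    simp [Multiset.count_cons] at this
    have h2 := (count_S hmod (m := m) x).2 hx.2
    omega

lemma no3 (hmod : r % 4 = 0) (hr : 8 ≤ r) (hm : 4 * m + 4 = 3 * r) :
    ¬ HasWZSS (S r m) 3 := by
  rintro ⟨t₁, t₂, hle, hcard, hsum⟩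
  rw [Multiset.card_add] at hcard
  -- reduce to the two shapes
  have main : ∀ u v : Multiset (Fin r → ZMod 3), u + v ≤ S r m →
      Multiset.card u + Multiset.card v = 3 → Multiset.card v ≤ Multiset.card u →
      u.sum = v.sum → False := by
    intro u v huv hc hvu hs
    by_cases h : Multiset.card v = 0
    · -- v = 0, u = {x,y,z}
      have hv0 : v = 0 := Multiset.card_eq_zero.mp h
      subst hv0
      rcases Multiset.card_eq_three.mp (by simpa using hc) with ⟨x, y, z, rfl⟩
      have hxyz : x + y + z = 0 := by
        simpa [add_assoc] using hs
      exact key1 hmod hr hm (by simpa using huv) hxyz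
    · -- v = {z}, u = {x,y}
      have h1 : Multiset.card v = 1 := by omega
      rcases Multiset.card_eq_one.mp h1 with ⟨z, rfl⟩
      rcases Multiset.card_eq_two.mp (by omega : Multiset.card u = 2) with ⟨x, y, rfl⟩
      have hxyz : x + y = z := by simpa using hs
      have h3 : ({x, y, z} : Multiset (Fin r → ZMod 3)) ≤ S r m := by
        refine le_trans (le_of_eq ?_) huv
        simp [Multiset.insert_eq_cons]
      exact key2 hmod hr hm h3 hxyz
  rcases le_total (Multiset.card t₂) (Multiset.card t₁) with hc | hc
  · exact main t₁ t₂ hle hcard hc hsum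
  · exact main t₂ t₁ (by rwa [add_comm] at hle) (by omega) hc hsum.symm

end SA3

open Finset
namespace SA3
variable {r : ℕ}

lemma TS_card : (TS r).card = r.choose (r / 2) := by
  have : TS r = powersetCard (r / 2) (univ : Finset (Fin r)) := by
    rw [Finset.powersetCard_eq_filter, Finset.powerset_univ]
    rfl
  rw [this, Finset.card_powersetCard, Finset.card_univ, Fintype.card_fin]

lemma BS_card {m : ℕ} (hm : m ≤ r) :
    (BS r m).card = ∑ j ∈ (Finset.Icc 1 m).filter (fun j => Odd j), r.choose j := by
  classical
  rw [Finset.card_eq_sum_card_fiberwise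
    (f := Finset.card) (t := (Finset.Icc 1 m).filter (fun j => Odd j)) ?_]
  · refine Finset.sum_congr rfl fun j hj => ?_
    simp only [Finset.mem_filter, Finset.mem_Icc] at hj
    have : (BS r m).filter (fun U => U.card = j) =
        powersetCard j (univ : Finset (Fin r)) := by
      ext U
      simp only [BS, Finset.mem_filter, Finset.mem_univ, true_and,
        Finset.mem_powersetCard_univ]
      constructor
      · rintro ⟨-, h⟩; exact h
      · intro h; rw [h]; exact ⟨⟨hj.2, hj.1.2⟩, rfl⟩
    rw [this, Finset.card_powersetCard, Finset.card_univ, Fintype.card_fin]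
  · intro U hU
    simp only [BS, Finset.mem_coe, Finset.mem_filter, Finset.mem_univ, true_and] at hU
    simp only [Finset.mem_coe, Finset.mem_filter, Finset.mem_Icc]
    obtain ⟨c, hc⟩ := hU.1
    exact ⟨⟨by omega, hU.2⟩, hU.1⟩

lemma S_card {m : ℕ} (hm : m ≤ r) :
    Multiset.card (S r m) =
      2 * (∑ j ∈ (Finset.Icc 1 m).filter (fun j => Odd j), r.choose j)
        + r.choose (r / 2) := by
  rw [S, Multiset.card_add, Multiset.card_nsmul, Multiset.card_map, Multiset.card_map,
    ← Finset.card_def, ← Finset.card_def, BS_card hm, TS_card]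

lemma exp_eq (hr : 1 ≤ r) : AddMonoid.exponent (Fin r → ZMod 3) = 3 := by
  have hdvd : AddMonoid.exponent (Fin r → ZMod 3) ∣ 3 := by
    apply AddMonoid.exponent_dvd_of_forall_nsmul_eq_zero
    intro g
    funext i
    show (3 : ℕ) • g i = 0
    have : ∀ a : ZMod 3, (3 : ℕ) • a = 0 := by decide
    exact this (g i)
  rcases (Nat.dvd_prime Nat.prime_three).mp hdvd with h1 | h3
  · exfalso
    have := AddMonoid.exponent_nsmul_eq_zero (G := Fin r → ZMod 3)
      (g := fun _ => (1 : ZMod 3))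
    rw [h1, one_nsmul] at this
    have h2 : (1 : ZMod 3) = 0 := by simpa using congrFun this ⟨0, hr⟩
    exact absurd h2 one_ne_zero
  · exact h3

lemma pigeonhole {α : Type*} [Fintype α] [DecidableEq α] (M : Multiset α)
    (h : 2 * Fintype.card α + 1 ≤ Multiset.card M) : ∃ a, 3 ≤ M.count a := by
  by_contra hc
  push_neg at hc
  have : Multiset.card M = ∑ a ∈ M.toFinset, M.count a :=
    (Multiset.toFinset_sum_count_eq M).symm
  have hle : ∑ a ∈ M.toFinset, M.count a ≤ ∑ a ∈ M.toFinset, 2 :=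
    Finset.sum_le_sum fun a _ => by have := hc a; omega
  simp only [Finset.sum_const, smul_eq_mul] at hle
  have hcard : M.toFinset.card ≤ Fintype.card α := Finset.card_le_univ _
  omega

end SA3


/-- Theorem 2(ii)(b): for `r ≥ 5` with `r ≡ 0 (mod 4)` and
`m = ⌊(3r-4)/4⌋`,
`s_A(C_3^r) ≥ 2·Σ_{1 ≤ j ≤ m, j odd} C(r,j) + C(r, r/2) + 1`. -/
theorem sA_three_lower_zero_mod_four (r : ℕ) (hr : 5 ≤ r) (hmod : r % 4 = 0) :
    2 * (∑ j ∈ (Finset.Icc 1 ((3 * r - 4) / 4)).filter (fun j => Odd j),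
          Nat.choose r j)
      + Nat.choose r (r / 2) + 1 ≤ sA (Fin r → ZMod 3) := by
  classical
  have hr8 : 8 ≤ r := by omega
  set m : ℕ := (3 * r - 4) / 4 with hmdef
  have hm : 4 * m + 4 = 3 * r := by omega
  have hmr : m ≤ r := by omega
  have hexp : AddMonoid.exponent (Fin r → ZMod 3) = 3 := SA3.exp_eq (by omega)
  rw [sA]
  apply le_csInf
  · -- nonempty: 2 * 3^r + 1 works
    refine ⟨2 * Fintype.card (Fin r → ZMod 3) + 1, fun M hM => ?_⟩
    obtain ⟨a, ha⟩ := SA3.pigeonhole M hM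
    refine ⟨Multiset.replicate 3 a, 0, ?_, ?_, ?_⟩
    · rw [add_zero]
      exact (Multiset.le_count_iff_replicate_le).mp ha
    · rw [add_zero, Multiset.card_replicate, hexp]
    · rw [Multiset.sum_replicate, Multiset.sum_zero]
      funext i
      show (3 : ℕ) • a i = 0
      have : ∀ b : ZMod 3, (3 : ℕ) • b = 0 := by decide
      exact this (a i)
  · intro ℓ hℓ
    by_contra hlt
    push_neg at hlt
    have hcard := SA3.S_card (r := r) (m := m) hmr
    have hle : ℓ ≤ Multiset.card (SA3.S r m) := by omega
    have := hℓ (SA3.S r m) hle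
    rw [hexp] at this
    exact SA3.no3 hmod hr8 hm this
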